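/- Let c, d : X* → ℝ be noncommutative polynomials (finitely supported formal power series) and u : [t0,t1] → ℝ^m integrable in each component. Then the parallel product of the corresponding Fliess operators satisfies F_c[u](t) · F_d[u](t) = F_{c ⧢ d}[u](t) for all t ∈ [t0,t1], where c ⧢ d is the shuffle product of the two polynomials. -/

import Mathlib

open MeasureTheory

/-- Extend `u : ℝ → ℝ^m` to the alphabet `X = {x_0, x_1, …, x_m}` by `u_0 ≡ 1`. -/
noncomputable def uext (m : ℕ) (u : ℝ → Fin m → ℝ) : ℝ → Fin (m + 1) → ℝ :=
  fun t => Fin.cases 1 (fun j => u t j)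

/-- Iterated integrals `E_η[u](t, t0)`: `E_∅[u] ≡ 1` and
`E_{x_i η̄}[u](t,t0) = ∫_{t0}^t u_i(τ) E_{η̄}[u](τ,t0) dτ`. -/
noncomputable def iterInt (m : ℕ) (u : ℝ → Fin m → ℝ) (t0 : ℝ) :
    List (Fin (m + 1)) → ℝ → ℝ
  | [] => fun _ => 1
  | i :: w => fun t => ∫ τ in t0..t, uext m u τ i * iterInt m u t0 w τ

/-- `shuffleCoeff η ξ ν` is the coefficient `(η ⧢ ξ, ν)` of the word `ν` in the shuffle
product of the words `η` and `ξ`, defined inductively by `η ⧢ ∅ = ∅ ⧢ η = η` and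
`(x_i η) ⧢ (x_j ξ) = x_i (η ⧢ (x_j ξ)) + x_j ((x_i η) ⧢ ξ)`. -/
def shuffleCoeff {A : Type*} [DecidableEq A] : List A → List A → List A → ℝ
  | [], ξ, ν => if ν = ξ then 1 else 0
  | η, [], ν => if ν = η then 1 else 0
  | _ :: _, _ :: _, [] => 0
  | a :: η, b :: ξ, z :: ν =>
      (if z = a then shuffleCoeff η (b :: ξ) ν else 0) +
      (if z = b then shuffleCoeff (a :: η) ξ ν else 0)
termination_by _ _ ν => ν.length

open intervalIntegral Set

section SC
variable {A : Type*} [DecidableEq A]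

lemma sc_nil_left (ξ ν : List A) : shuffleCoeff [] ξ ν = if ν = ξ then 1 else 0 := by
  cases ξ <;> simp [shuffleCoeff]

lemma sc_nil_right (η ν : List A) : shuffleCoeff η [] ν = if ν = η then 1 else 0 := by
  cases η <;> simp [shuffleCoeff]

lemma sc_cons_nil (a : A) (η ξ : List A) (b : A) : shuffleCoeff (a :: η) (b :: ξ) [] = 0 := by
  simp [shuffleCoeff]

lemma sc_cons_cons (a b z : A) (η ξ ν : List A) :
    shuffleCoeff (a :: η) (b :: ξ) (z :: ν) =
      (if z = a then shuffleCoeff η (b :: ξ) ν else 0) +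
      (if z = b then shuffleCoeff (a :: η) ξ ν else 0) := by
  simp [shuffleCoeff]

lemma sc_len : ∀ (ν η ξ : List A), shuffleCoeff η ξ ν ≠ 0 → ν.length = η.length + ξ.length := by
  intro ν
  induction ν with
  | nil =>
    rintro (_|⟨a,η⟩) (_|⟨b,ξ⟩) h
    · simp
    · rw [sc_nil_left] at h
      by_cases h' : ([]:List A) = b :: ξ <;> simp_all
    · rw [sc_nil_right] at h
      by_cases h' : ([]:List A) = a :: η <;> simp_all
    · simp [sc_cons_nil] at h
  | cons z ν ih =>
    rintro (_|⟨a,η⟩) (_|⟨b,ξ⟩) h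
    · rw [sc_nil_left] at h
      by_cases h' : z :: ν = [] <;> simp_all
    · rw [sc_nil_left] at h
      by_cases h' : z :: ν = b :: ξ
      · simp [h']
      · simp [h'] at h
    · rw [sc_nil_right] at h
      by_cases h' : z :: ν = a :: η
      · simp [h']
      · simp [h'] at h
    · rw [sc_cons_cons] at h
      rcases (by by_contra hc; push_neg at hc; simp [hc.1, hc.2] at h :
          (if z = a then shuffleCoeff η (b :: ξ) ν else 0) ≠ 0 ∨
          (if z = b then shuffleCoeff (a :: η) ξ ν else 0) ≠ 0) with h1 | h1
      · by_cases hz : z = a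
        · simp only [hz, if_true] at h1
          have := ih η (b :: ξ) h1
          simp at this ⊢; omega
        · simp [hz] at h1
      · by_cases hz : z = b
        · simp only [hz, if_true] at h1
          have := ih (a :: η) ξ h1
          simp at this ⊢; omega
        · simp [hz] at h1

end SC

/-- Finset of all lists over `Fin (m+1)` of length `n`. -/
noncomputable def lenFinset (m n : ℕ) : Finset (List (Fin (m + 1))) :=
  (List.finite_length_eq (Fin (m + 1)) n).toFinset

lemma mem_lenFinset {m n : ℕ} {ν : List (Fin (m + 1))} :
    ν ∈ lenFinset m n ↔ ν.length = n := Set.Finite.mem_toFinset _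

lemma sum_lenFinset_succ (m n : ℕ) (F : List (Fin (m + 1)) → ℝ) :
    ∑ ν ∈ lenFinset m (n + 1), F ν =
      ∑ z : Fin (m + 1), ∑ ν ∈ lenFinset m n, F (z :: ν) := by
  rw [← Finset.sum_product']
  apply Finset.sum_nbij' (fun ν => (ν.headI, ν.tail)) (fun p => p.1 :: p.2)
  · intro ν hν
    rw [mem_lenFinset] at hν
    cases ν with
    | nil => simp at hν
    | cons z ν => simp_all [mem_lenFinset]
  · intro p hp
    simp only [Finset.mem_product] at hp
    rw [mem_lenFinset] at hp ⊢
    simp [hp.2]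
  · intro ν hν
    rw [mem_lenFinset] at hν
    cases ν with
    | nil => simp at hν
    | cons z ν => simp
  · intro p hp
    simp
  · intro ν hν
    rw [mem_lenFinset] at hν
    cases ν with
    | nil => simp at hν
    | cons z ν => simp

lemma parts (a b : ℝ) (hab : a ≤ b) (f g : ℝ → ℝ)
    (hf : IntegrableOn f (Icc a b)) (hg : IntegrableOn g (Icc a b)) :
    (∫ x in a..b, f x) * (∫ x in a..b, g x) =
      (∫ x in a..b, f x * (∫ y in a..x, g y)) + (∫ y in a..b, (∫ x in a..y, f x) * g y) := by
  have huIcc : uIcc a b = Icc a b := uIcc_of_le hab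
  have hfI : IntervalIntegrable f volume a b := by
    rw [intervalIntegrable_iff_integrableOn_Icc_of_le hab]; exact hf
  have hgI : IntervalIntegrable g volume a b := by
    rw [intervalIntegrable_iff_integrableOn_Icc_of_le hab]; exact hg
  have hfμ : Integrable f (volume.restrict (Ioc a b)) := hf.mono_set Ioc_subset_Icc_self
  have hgμ : Integrable g (volume.restrict (Ioc a b)) := hg.mono_set Ioc_subset_Icc_self
  have hGc : ContinuousOn (fun x => ∫ y in a..x, g y) (uIcc a b) :=
    continuousOn_primitive_interval (by rw [huIcc]; exact hg)
  have hGc' : ContinuousOn (fun x => ∫ y in x..b, g y) (uIcc a b) :=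
    continuousOn_primitive_interval_left (by rw [huIcc]; exact hg)
  have h1 : IntervalIntegrable (fun x => f x * ∫ y in a..x, g y) volume a b :=
    hfI.mul_continuousOn hGc
  have h2 : IntervalIntegrable (fun x => f x * ∫ y in x..b, g y) volume a b :=
    hfI.mul_continuousOn hGc'
  have step1 : (∫ x in a..b, f x) * (∫ x in a..b, g x) =
      (∫ x in a..b, f x * (∫ y in a..x, g y)) + (∫ x in a..b, f x * (∫ y in x..b, g y)) := by
    rw [← intervalIntegral.integral_mul_const]
    rw [← integral_add h1 h2]
    apply integral_congr
    intro x hx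
    rw [huIcc] at hx
    dsimp only
    have : (∫ y in a..x, g y) + (∫ y in x..b, g y) = ∫ y in a..b, g y :=
      integral_add_adjacent_intervals
        (hgI.mono_set (by rw [huIcc, uIcc_of_le hx.1]; exact Icc_subset_Icc le_rfl hx.2))
        (hgI.mono_set (by rw [huIcc, uIcc_of_le hx.2]; exact Icc_subset_Icc hx.1 le_rfl))
    rw [← this, mul_add]
  rw [step1]
  congr 1
  set K : ℝ → ℝ → ℝ := fun x y => {p : ℝ × ℝ | p.1 < p.2}.indicator (fun p => f p.1 * g p.2) (x, y) with hK
  have hKint : Integrable (Function.uncurry K)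
      ((volume.restrict (Ioc a b)).prod (volume.restrict (Ioc a b))) := by
    apply Integrable.indicator (hfμ.mul_prod hgμ)
    exact measurableSet_lt measurable_fst measurable_snd
  have hKeq : ∀ x y, K x y = (Ioi x).indicator g y * f x := by
    intro x y
    by_cases h : x < y <;> simp [hK, Set.indicator, h, mul_comm]
  have hKeq2 : ∀ x y, K x y = (Iio y).indicator f x * g y := by
    intro x y
    by_cases h : x < y <;> simp [hK, Set.indicator, h]
  calc (∫ x in a..b, f x * (∫ y in x..b, g y))
      = ∫ x in Ioc a b, ∫ y in Ioc a b, K x y := by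
        rw [integral_of_le hab]
        apply setIntegral_congr_fun measurableSet_Ioc
        intro x hx
        simp only
        rw [integral_of_le hx.2]
        simp_rw [hKeq]
        rw [MeasureTheory.integral_mul_const, setIntegral_indicator measurableSet_Ioi]
        have hset : Ioc a b ∩ Ioi x = Ioc x b := by
          ext z; constructor
          · rintro ⟨⟨h1, h2⟩, h3⟩; exact ⟨h3, h2⟩
          · rintro ⟨h1, h2⟩; exact ⟨⟨lt_trans hx.1 h1, h2⟩, h1⟩
        rw [hset, mul_comm]
    _ = ∫ y in Ioc a b, ∫ x in Ioc a b, K x y := integral_integral_swap hKint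
    _ = ∫ y in a..b, (∫ x in a..y, f x) * g y := by
        rw [integral_of_le hab]
        apply setIntegral_congr_fun measurableSet_Ioc
        intro y hy
        simp only
        simp_rw [hKeq2]
        rw [MeasureTheory.integral_mul_const, setIntegral_indicator measurableSet_Iio]
        have : Ioc a b ∩ Iio y = Ioo a y := by
          ext x; constructor
          · rintro ⟨⟨h1, h2⟩, h3⟩; exact ⟨h1, h3⟩
          · rintro ⟨h1, h3⟩; exact ⟨⟨h1, le_trans (le_of_lt h3) hy.2⟩, h3⟩
        rw [this, integral_of_le (le_of_lt hy.1), integral_Ioc_eq_integral_Ioo]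

section Analytic
variable {m : ℕ} {u : ℝ → Fin m → ℝ} {t0 t1 : ℝ}

lemma uext_integrable (hint : ∀ i, IntegrableOn (fun t => u t i) (Icc t0 t1))
    (i : Fin (m + 1)) : IntegrableOn (fun t => uext m u t i) (Icc t0 t1) := by
  induction i using Fin.cases with
  | zero =>
    simp only [uext, Fin.cases_zero]
    exact integrableOn_const measure_Icc_lt_top.ne
  | succ j => simpa only [uext, Fin.cases_succ] using hint j

lemma iterInt_aux (hle : t0 ≤ t1) (hint : ∀ i, IntegrableOn (fun t => u t i) (Icc t0 t1)) :
    ∀ w : List (Fin (m + 1)), ContinuousOn (iterInt m u t0 w) (Icc t0 t1) ∧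
      ∀ i, IntegrableOn (fun τ => uext m u τ i * iterInt m u t0 w τ) (Icc t0 t1) := by
  intro w
  induction w with
  | nil =>
    refine ⟨continuousOn_const, fun i => ?_⟩
    simpa [iterInt] using uext_integrable hint i
  | cons j w ih =>
    have hcont : ContinuousOn (iterInt m u t0 (j :: w)) (Icc t0 t1) := by
      have := continuousOn_primitive_interval (a := t0) (b := t1)
        (f := fun τ => uext m u τ j * iterInt m u t0 w τ) (μ := volume)
        (by rw [uIcc_of_le hle]; exact ih.2 j)
      rw [uIcc_of_le hle] at this
      exact this
    exact ⟨hcont, fun i => (uext_integrable hint i).mul_continuousOn hcont isCompact_Icc⟩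

end Analytic

section Key
variable {m : ℕ} {u : ℝ → Fin m → ℝ} {t0 t1 : ℝ}

lemma key (hle : t0 ≤ t1) (hint : ∀ i, IntegrableOn (fun t => u t i) (Icc t0 t1)) :
    ∀ n (η ξ : List (Fin (m + 1))), η.length + ξ.length = n → ∀ t ∈ Icc t0 t1,
      iterInt m u t0 η t * iterInt m u t0 ξ t =
        ∑ ν ∈ lenFinset m n, shuffleCoeff η ξ ν * iterInt m u t0 ν t := by
  intro n
  induction n using Nat.strong_induction_on with
  | _ n ih =>
  intro η ξ hn t ht
  have hξmem : ∀ (ζ : List (Fin (m+1))), ζ.length = n → ζ ∈ lenFinset m n :=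
    fun ζ h => mem_lenFinset.2 h
  rcases η with _ | ⟨a, η⟩
  · -- η = []
    simp only [List.length_nil, Nat.zero_add] at hn
    rw [show iterInt m u t0 [] t = 1 from rfl, one_mul]
    rw [Finset.sum_congr rfl (fun ν _ => by rw [sc_nil_left])]
    simp only [ite_mul, one_mul, zero_mul]
    rw [Finset.sum_ite_eq' (lenFinset m n) ξ (fun ν => iterInt m u t0 ν t)]
    rw [if_pos (hξmem ξ hn)]
  · rcases ξ with _ | ⟨b, ξ⟩
    · -- ξ = []
      simp only [List.length_nil, Nat.add_zero] at hn
      rw [show iterInt m u t0 [] t = 1 from rfl, mul_one]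
      rw [Finset.sum_congr rfl (fun ν _ => by rw [sc_nil_right])]
      simp only [ite_mul, one_mul, zero_mul]
      rw [Finset.sum_ite_eq' (lenFinset m n) (a :: η) (fun ν => iterInt m u t0 ν t)]
      rw [if_pos (hξmem _ hn)]
    · -- both cons
      obtain ⟨k, rfl⟩ : ∃ k, n = k + 1 := ⟨n - 1, by simp only [List.length_cons] at hn; omega⟩
      have hk : k < k + 1 := Nat.lt_succ_self k
      have hsub : Icc t0 t ⊆ Icc t0 t1 := Icc_subset_Icc le_rfl ht.2
      have huIcct : uIcc t0 t = Icc t0 t := uIcc_of_le ht.1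
      have hIcc_sub : ∀ x ∈ Icc t0 t, x ∈ Icc t0 t1 := fun x hx => hsub hx
      -- integrability on Icc t0 t of both integrands
      have hf : IntegrableOn (fun τ => uext m u τ a * iterInt m u t0 η τ) (Icc t0 t) :=
        ((iterInt_aux hle hint η).2 a).mono_set hsub
      have hg : IntegrableOn (fun τ => uext m u τ b * iterInt m u t0 ξ τ) (Icc t0 t) :=
        ((iterInt_aux hle hint ξ).2 b).mono_set hsub
      have hparts := parts t0 t ht.1 _ _ hf hg
      have hL : iterInt m u t0 (a :: η) t * iterInt m u t0 (b :: ξ) t =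
          (∫ x in t0..t, (uext m u x a * iterInt m u t0 η x) *
              iterInt m u t0 (b :: ξ) x) +
          (∫ y in t0..t, iterInt m u t0 (a :: η) y *
              (uext m u y b * iterInt m u t0 ξ y)) := by
        show (∫ x in t0..t, uext m u x a * iterInt m u t0 η x) *
            (∫ x in t0..t, uext m u x b * iterInt m u t0 ξ x) = _
        exact hparts
      -- generic expansion of one of the two integrals
      have expand : ∀ (c : Fin (m+1)) (α β : List (Fin (m+1))), α.length + β.length = k →
          (∫ x in t0..t, uext m u x c * (iterInt m u t0 α x * iterInt m u t0 β x)) =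
            ∑ ν ∈ lenFinset m k, shuffleCoeff α β ν * iterInt m u t0 (c :: ν) t := by
        intro c α β hab
        have congr1 : (∫ x in t0..t, uext m u x c * (iterInt m u t0 α x * iterInt m u t0 β x)) =
            ∫ x in t0..t, ∑ ν ∈ lenFinset m k,
              shuffleCoeff α β ν * (uext m u x c * iterInt m u t0 ν x) := by
          apply integral_congr
          intro x hx
          rw [huIcct] at hx
          dsimp only
          rw [ih k hk α β hab x (hsub hx), Finset.mul_sum]
          exact Finset.sum_congr rfl fun ν _ => by ring
        rw [congr1, intervalIntegral.integral_finset_sum]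
        · exact Finset.sum_congr rfl fun ν _ => by
            rw [intervalIntegral.integral_const_mul]
            rfl
        · intro ν _
          apply IntervalIntegrable.const_mul
          rw [intervalIntegrable_iff_integrableOn_Icc_of_le ht.1]
          exact ((iterInt_aux hle hint ν).2 c).mono_set hsub
      have h1 : (∫ x in t0..t, (uext m u x a * iterInt m u t0 η x) * iterInt m u t0 (b :: ξ) x) =
          ∑ ν ∈ lenFinset m k, shuffleCoeff η (b :: ξ) ν * iterInt m u t0 (a :: ν) t := by
        rw [show (fun x => (uext m u x a * iterInt m u t0 η x) * iterInt m u t0 (b :: ξ) x) =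
            (fun x => uext m u x a * (iterInt m u t0 η x * iterInt m u t0 (b :: ξ) x)) from
          funext fun x => by ring]
        exact expand a η (b :: ξ) (by simp only [List.length_cons] at hn ⊢; omega)
      have h2 : (∫ y in t0..t, iterInt m u t0 (a :: η) y *
              (uext m u y b * iterInt m u t0 ξ y)) =
          ∑ ν ∈ lenFinset m k, shuffleCoeff (a :: η) ξ ν * iterInt m u t0 (b :: ν) t := by
        rw [show (fun y => iterInt m u t0 (a :: η) y * (uext m u y b * iterInt m u t0 ξ y)) =
            (fun y => uext m u y b * (iterInt m u t0 (a :: η) y * iterInt m u t0 ξ y)) from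
          funext fun y => by ring]
        exact expand b (a :: η) ξ (by simp only [List.length_cons] at hn ⊢; omega)
      rw [hL, h1, h2, sum_lenFinset_succ m k
        (fun ν => shuffleCoeff (a :: η) (b :: ξ) ν * iterInt m u t0 ν t)]
      simp only [sc_cons_cons, add_mul, ite_mul, zero_mul, Finset.sum_add_distrib,
        Finset.sum_ite_irrel, Finset.sum_const_zero, Finset.sum_ite_eq', Finset.mem_univ,
        if_true]

end Key


/-- For finitely supported (polynomial) generating series `c, d` and integrable `u`, the
parallel product of Fliess operators satisfies `F_c[u](t) · F_d[u](t) = F_{c ⧢ d}[u](t)`,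
where `c ⧢ d` is the (bilinearly extended) shuffle product. -/
theorem fliess_parallel_product (m : ℕ) (t0 t1 : ℝ) (hlt : t0 < t1)
    (c d : List (Fin (m + 1)) →₀ ℝ)
    (u : ℝ → Fin m → ℝ)
    (hint : ∀ i, IntegrableOn (fun t => u t i) (Set.Icc t0 t1)) :
    ∀ t ∈ Set.Icc t0 t1,
      (∑ η ∈ c.support, c η * iterInt m u t0 η t) *
        (∑ ξ ∈ d.support, d ξ * iterInt m u t0 ξ t) =
      ∑' ν : List (Fin (m + 1)),
        (∑ η ∈ c.support, ∑ ξ ∈ d.support, c η * d ξ * shuffleCoeff η ξ ν) *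
          iterInt m u t0 ν t := by
  intro t ht
  have hle : t0 ≤ t1 := le_of_lt hlt
  set T : Finset (List (Fin (m + 1))) :=
    (c.support ×ˢ d.support).biUnion (fun p => lenFinset m (p.1.length + p.2.length)) with hT
  have hmemT : ∀ η ∈ c.support, ∀ ξ ∈ d.support, ∀ ν,
      ν.length = η.length + ξ.length → ν ∈ T := by
    intro η hη ξ hξ ν hν
    exact Finset.mem_biUnion.2 ⟨(η, ξ), Finset.mem_product.2 ⟨hη, hξ⟩, mem_lenFinset.2 hν⟩
  have htsum : (∑' ν : List (Fin (m + 1)),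
        (∑ η ∈ c.support, ∑ ξ ∈ d.support, c η * d ξ * shuffleCoeff η ξ ν) *
          iterInt m u t0 ν t) =
      ∑ ν ∈ T, (∑ η ∈ c.support, ∑ ξ ∈ d.support, c η * d ξ * shuffleCoeff η ξ ν) *
          iterInt m u t0 ν t := by
    apply tsum_eq_sum
    intro ν hν
    have : (∑ η ∈ c.support, ∑ ξ ∈ d.support, c η * d ξ * shuffleCoeff η ξ ν) = 0 := by
      apply Finset.sum_eq_zero
      intro η hη
      apply Finset.sum_eq_zero
      intro ξ hξ
      by_cases hsc : shuffleCoeff η ξ ν = 0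
      · rw [hsc, mul_zero]
      · exact absurd (hmemT η hη ξ hξ ν (sc_len ν η ξ hsc)) hν
    rw [this, zero_mul]
  rw [htsum]
  have rhs_eq : (∑ ν ∈ T, (∑ η ∈ c.support, ∑ ξ ∈ d.support, c η * d ξ * shuffleCoeff η ξ ν) *
        iterInt m u t0 ν t) =
      ∑ η ∈ c.support, ∑ ξ ∈ d.support, ∑ ν ∈ T,
        c η * d ξ * shuffleCoeff η ξ ν * iterInt m u t0 ν t := by
    simp_rw [Finset.sum_mul]
    rw [Finset.sum_comm]
    exact Finset.sum_congr rfl fun η _ => Finset.sum_comm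
  rw [rhs_eq, Finset.sum_mul_sum]
  apply Finset.sum_congr rfl
  intro η hη
  apply Finset.sum_congr rfl
  intro ξ hξ
  have hkey := key hle hint (η.length + ξ.length) η ξ rfl t ht
  calc c η * iterInt m u t0 η t * (d ξ * iterInt m u t0 ξ t)
      = c η * d ξ * (iterInt m u t0 η t * iterInt m u t0 ξ t) := by ring
    _ = c η * d ξ * ∑ ν ∈ lenFinset m (η.length + ξ.length),
          shuffleCoeff η ξ ν * iterInt m u t0 ν t := by rw [hkey]
    _ = ∑ ν ∈ lenFinset m (η.length + ξ.length),
          c η * d ξ * shuffleCoeff η ξ ν * iterInt m u t0 ν t := by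
        rw [Finset.mul_sum]; exact Finset.sum_congr rfl fun ν _ => by ring
    _ = ∑ ν ∈ T, c η * d ξ * shuffleCoeff η ξ ν * iterInt m u t0 ν t := by
        apply Finset.sum_subset
        · intro ν hν
          exact hmemT η hη ξ hξ ν (mem_lenFinset.1 hν)
        · intro ν _ hν
          have : shuffleCoeff η ξ ν = 0 := by
            by_contra hsc
            exact hν (mem_lenFinset.2 (sc_len ν η ξ hsc))
          rw [this, mul_zero, zero_mul]
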